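/- There are exactly six ℝ-algebra automorphisms f of 𝔹ℂ with f ∘ f = id, namely: the identity; (z₁ + z₂i₂) ↦ z₁ - z₂i₂; (z₁ + z₂i₂) ↦ z̄₁ + z̄₂i₂; (z₁ + z₂i₂) ↦ z̄₁ - z̄₂i₂; the map determined by i₁ ↦ -i₂, i₂ ↦ -i₁; and the map determined by i₁ ↦ i₂, i₂ ↦ i₁. -/

import Mathlib

noncomputable section

/-- The bicomplex numbers, modeled via their idempotent representation as `ℂ × ℂ`
(componentwise addition and multiplication). -/
abbrev BC : Type := ℂ × ℂ

namespace BC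

/-- The imaginary unit `i₁`. -/
def i1 : BC := (Complex.I, Complex.I)

/-- The imaginary unit `i₂`. -/
def i2 : BC := (-Complex.I, Complex.I)

/-- The hyperbolic unit `j₁ = i₁ i₂`. -/
def j1 : BC := (1, -1)

/-- The idempotent `e₁ = (1 + j₁)/2`. -/
def e1 : BC := (1, 0)

/-- The idempotent `e₂ = (1 - j₁)/2`. -/
def e2 : BC := (0, 1)

/-- The embedding of `ℂ(i₁)` into the bicomplex numbers. -/
def C (z : ℂ) : BC := (z, z)

end BC

open BC
section Aux
open Complex

def pc (g h : ℂ ≃ₐ[ℝ] ℂ) : BC ≃ₐ[ℝ] BC :=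
  AlgEquiv.ofRingEquiv (f := RingEquiv.prodCongr g.toRingEquiv h.toRingEquiv)
    (fun r => by
      ext
      · simpa using g.commutes r
      · simpa using h.commutes r)

def sw : BC ≃ₐ[ℝ] BC :=
  AlgEquiv.ofRingEquiv (f := RingEquiv.prodComm)
    (fun r => by ext <;> simp [Prod.algebraMap_apply])

@[simp] lemma pc_apply (g h : ℂ ≃ₐ[ℝ] ℂ) (x : BC) : pc g h x = (g x.1, h x.2) := rfl
@[simp] lemma sw_apply (x : BC) : sw x = (x.2, x.1) := rfl

def F0 : BC ≃ₐ[ℝ] BC := AlgEquiv.refl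
def F1 : BC ≃ₐ[ℝ] BC := sw
def F2 : BC ≃ₐ[ℝ] BC := sw.trans (pc conjAe conjAe)
def F3 : BC ≃ₐ[ℝ] BC := pc conjAe conjAe
def F4 : BC ≃ₐ[ℝ] BC := pc AlgEquiv.refl conjAe
def F5 : BC ≃ₐ[ℝ] BC := pc conjAe AlgEquiv.refl

lemma decomp (a b : ℂ) :
    ((a, b) : BC) = a.re • e1 + a.im • (i1 * e1) + b.re • (1 - e1) + b.im • (i1 * (1 - e1)) := by
  simp [e1, i1, Prod.ext_iff, Complex.ext_iff]

lemma key (f : BC ≃ₐ[ℝ] BC) (a b : ℂ) :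
    f (a, b) = a.re • f e1 + a.im • (f i1 * f e1) + b.re • (1 - f e1)
      + b.im • (f i1 * (1 - f e1)) := by
  conv_lhs => rw [decomp a b]
  simp [map_add, map_smul, map_mul, map_sub, map_one]

lemma sq_idem {x : ℂ} (h : x * x = x) : x = 0 ∨ x = 1 := by
  have : x * (x - 1) = 0 := by linear_combination h
  rcases mul_eq_zero.mp this with h|h
  · exact Or.inl h
  · exact Or.inr (sub_eq_zero.mp h)

lemma sq_negone {x : ℂ} (h : x * x = -1) : x = I ∨ x = -I := by
  exact mul_self_eq_mul_self_iff.mp (by rw [h, I_mul_I])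

lemma invol_cases (f : BC ≃ₐ[ℝ] BC) (hinv : ∀ s, f (f s) = s) :
    f = F0 ∨ f = F1 ∨ f = F2 ∨ f = F3 ∨ f = F4 ∨ f = F5 := by
  have he2 : f e1 * f e1 = f e1 := by
    rw [← map_mul, show e1 * e1 = e1 from by simp [e1, Prod.ext_iff]]
  have hq2 : f i1 * f i1 = -1 := by
    rw [← map_mul, show i1 * i1 = (-1 : BC) from by simp [i1, Prod.ext_iff], map_neg, map_one]
  have hp1 := sq_idem (x := (f e1).1) (by simpa using congrArg Prod.fst he2)
  have hp2 := sq_idem (x := (f e1).2) (by simpa using congrArg Prod.snd he2)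
  have hq1 := sq_negone (x := (f i1).1) (by simpa using congrArg Prod.fst hq2)
  have hq2' := sq_negone (x := (f i1).2) (by simpa using congrArg Prod.snd hq2)
  have h0 : f e1 ≠ 0 := by
    intro h
    have := hinv e1
    rw [h, map_zero] at this
    simp [e1, Prod.ext_iff] at this
  have h1 : f e1 ≠ 1 := by
    intro h
    have := hinv e1
    rw [h, map_one] at this
    simp [e1, Prod.ext_iff] at this
  have he : f e1 = e1 ∨ f e1 = e2 := by
    rcases hp1 with h|h <;> rcases hp2 with h'|h'
    · exact absurd (Prod.ext h h') h0
    · exact Or.inr (Prod.ext h h')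
    · exact Or.inl (Prod.ext h h')
    · exact absurd (Prod.ext h h') h1
  rcases he with he|he <;> rcases hq1 with q1|q1 <;> rcases hq2' with q2|q2
  -- case e1, (I,I) : F0
  · have hq' : f i1 = (I, I) := Prod.ext q1 q2
    refine Or.inl (AlgEquiv.ext fun s => ?_)
    obtain ⟨a, b⟩ := s
    rw [key f a b, he, hq']
    simp [F0, e1, Prod.ext_iff, Complex.ext_iff]
  -- case e1, (I,-I) : F4
  · have hq' : f i1 = (I, -I) := Prod.ext q1 q2
    refine Or.inr (Or.inr (Or.inr (Or.inr (Or.inl (AlgEquiv.ext fun s => ?_)))))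
    obtain ⟨a, b⟩ := s
    rw [key f a b, he, hq']
    simp [F4, e1, Prod.ext_iff, Complex.ext_iff]
  -- case e1, (-I,I) : F5
  · have hq' : f i1 = (-I, I) := Prod.ext q1 q2
    refine Or.inr (Or.inr (Or.inr (Or.inr (Or.inr (AlgEquiv.ext fun s => ?_)))))
    obtain ⟨a, b⟩ := s
    rw [key f a b, he, hq']
    simp [F5, e1, Prod.ext_iff, Complex.ext_iff]
  -- case e1, (-I,-I) : F3
  · have hq' : f i1 = (-I, -I) := Prod.ext q1 q2
    refine Or.inr (Or.inr (Or.inr (Or.inl (AlgEquiv.ext fun s => ?_))))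
    obtain ⟨a, b⟩ := s
    rw [key f a b, he, hq']
    simp [F3, e1, Prod.ext_iff, Complex.ext_iff]
  -- case e2, (I,I) : F1
  · have hq' : f i1 = (I, I) := Prod.ext q1 q2
    refine Or.inr (Or.inl (AlgEquiv.ext fun s => ?_))
    obtain ⟨a, b⟩ := s
    rw [key f a b, he, hq']
    simp [F1, e1, e2, Prod.ext_iff, Complex.ext_iff]
  -- case e2, (I,-I) : bad
  · exfalso
    have hq' : f i1 = (I, -I) := Prod.ext q1 q2
    have h := hinv i1
    rw [hq', key f I (-I), he, hq'] at h
    simp [e1, e2, i1, Prod.ext_iff, Complex.ext_iff] at h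
    exact absurd h (by norm_num)
  -- case e2, (-I,I) : bad
  · exfalso
    have hq' : f i1 = (-I, I) := Prod.ext q1 q2
    have h := hinv i1
    rw [hq', key f (-I) I, he, hq'] at h
    simp [e1, e2, i1, Prod.ext_iff, Complex.ext_iff] at h
    exact absurd h (by norm_num)
  -- case e2, (-I,-I) : F2
  · have hq' : f i1 = (-I, -I) := Prod.ext q1 q2
    refine Or.inr (Or.inr (Or.inl (AlgEquiv.ext fun s => ?_)))
    obtain ⟨a, b⟩ := s
    rw [key f a b, he, hq']
    simp [F2, e1, e2, Prod.ext_iff, Complex.ext_iff]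

lemma ext_e1_i1 (f g : BC ≃ₐ[ℝ] BC) (h1 : f e1 = g e1) (h2 : f i1 = g i1) : f = g := by
  refine AlgEquiv.ext fun s => ?_
  obtain ⟨a, b⟩ := s
  rw [key f a b, key g a b, h1, h2]

lemma inv0 : ∀ s : BC, F0 (F0 s) = s := fun s => rfl
lemma inv1 : ∀ s : BC, F1 (F1 s) = s := fun s => by simp [F1]
lemma inv2 : ∀ s : BC, F2 (F2 s) = s := fun s => by simp [F2]
lemma inv3 : ∀ s : BC, F3 (F3 s) = s := fun s => by simp [F3]
lemma inv4 : ∀ s : BC, F4 (F4 s) = s := fun s => by simp [F4]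
lemma inv5 : ∀ s : BC, F5 (F5 s) = s := fun s => by simp [F5]

def w : BC := (I, 2*I)

lemma dist (g h : BC ≃ₐ[ℝ] BC) (hne : g w ≠ h w) : g ≠ h := fun he => hne (he ▸ rfl)

lemma hF0 : F0 w = (I, 2*I) := rfl
lemma hF1 : F1 w = (2*I, I) := rfl
lemma hF2 : F2 w = (-(2*I), -I) := by simp [F2, w, map_ofNat]
lemma hF3 : F3 w = (-I, -(2*I)) := by simp [F3, w, map_ofNat]
lemma hF4 : F4 w = (I, -(2*I)) := by simp [F4, w, map_ofNat]
lemma hF5 : F5 w = (-I, 2*I) := by simp [F5, w]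

lemma n01 : F0 ≠ F1 := dist _ _ (by rw [hF0, hF1]; norm_num [Prod.ext_iff, Complex.ext_iff])
lemma n02 : F0 ≠ F2 := dist _ _ (by rw [hF0, hF2]; norm_num [Prod.ext_iff, Complex.ext_iff])
lemma n03 : F0 ≠ F3 := dist _ _ (by rw [hF0, hF3]; norm_num [Prod.ext_iff, Complex.ext_iff])
lemma n04 : F0 ≠ F4 := dist _ _ (by rw [hF0, hF4]; norm_num [Prod.ext_iff, Complex.ext_iff])
lemma n05 : F0 ≠ F5 := dist _ _ (by rw [hF0, hF5]; norm_num [Prod.ext_iff, Complex.ext_iff])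
lemma n12 : F1 ≠ F2 := dist _ _ (by rw [hF1, hF2]; norm_num [Prod.ext_iff, Complex.ext_iff])
lemma n13 : F1 ≠ F3 := dist _ _ (by rw [hF1, hF3]; norm_num [Prod.ext_iff, Complex.ext_iff])
lemma n14 : F1 ≠ F4 := dist _ _ (by rw [hF1, hF4]; norm_num [Prod.ext_iff, Complex.ext_iff])
lemma n15 : F1 ≠ F5 := dist _ _ (by rw [hF1, hF5]; norm_num [Prod.ext_iff, Complex.ext_iff])
lemma n23 : F2 ≠ F3 := dist _ _ (by rw [hF2, hF3]; norm_num [Prod.ext_iff, Complex.ext_iff])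
lemma n24 : F2 ≠ F4 := dist _ _ (by rw [hF2, hF4]; norm_num [Prod.ext_iff, Complex.ext_iff])
lemma n25 : F2 ≠ F5 := dist _ _ (by rw [hF2, hF5]; norm_num [Prod.ext_iff, Complex.ext_iff])
lemma n34 : F3 ≠ F4 := dist _ _ (by rw [hF3, hF4]; norm_num [Prod.ext_iff, Complex.ext_iff])
lemma n35 : F3 ≠ F5 := dist _ _ (by rw [hF3, hF5]; norm_num [Prod.ext_iff, Complex.ext_iff])
lemma n45 : F4 ≠ F5 := dist _ _ (by rw [hF4, hF5]; norm_num [Prod.ext_iff, Complex.ext_iff])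

lemma card6 : Nat.card {f : BC ≃ₐ[ℝ] BC // ∀ s, f (f s) = s} = 6 := by
  have hS : {f : BC ≃ₐ[ℝ] BC | ∀ s, f (f s) = s} = {F0, F1, F2, F3, F4, F5} := by
    ext f
    constructor
    · intro h
      simpa [Set.mem_insert_iff, Set.mem_singleton_iff] using invol_cases f h
    · intro h
      simp only [Set.mem_insert_iff, Set.mem_singleton_iff] at h
      rcases h with h|h|h|h|h|h <;> subst h
      exacts [inv0, inv1, inv2, inv3, inv4, inv5]
  have hcard : Nat.card {f : BC ≃ₐ[ℝ] BC // ∀ s, f (f s) = s}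
      = ({f : BC ≃ₐ[ℝ] BC | ∀ s, f (f s) = s} : Set _).ncard := Nat.card_coe_set_eq _
  rw [hcard, hS]
  have fin1 : ({F5} : Set (BC ≃ₐ[ℝ] BC)).Finite := Set.finite_singleton _
  have fin2 := fin1.insert F4
  have fin3 := fin2.insert F3
  have fin4 := fin3.insert F2
  have fin5 := fin4.insert F1
  rw [Set.ncard_insert_of_notMem (by
        simp only [Set.mem_insert_iff, Set.mem_singleton_iff]; push_neg
        exact ⟨n01, n02, n03, n04, n05⟩) fin5,
      Set.ncard_insert_of_notMem (by
        simp only [Set.mem_insert_iff, Set.mem_singleton_iff]; push_neg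
        exact ⟨n12, n13, n14, n15⟩) fin4,
      Set.ncard_insert_of_notMem (by
        simp only [Set.mem_insert_iff, Set.mem_singleton_iff]; push_neg
        exact ⟨n23, n24, n25⟩) fin3,
      Set.ncard_insert_of_notMem (by
        simp only [Set.mem_insert_iff, Set.mem_singleton_iff]; push_neg
        exact ⟨n34, n35⟩) fin2,
      Set.ncard_insert_of_notMem (by simpa using n45) fin1,
      Set.ncard_singleton]

end Aux

/-- There are exactly six ℝ-algebra automorphisms `f` of `𝔹ℂ` with `f ∘ f = id`,
namely the six listed involutions. -/
theorem stmt_9 :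
    Nat.card {f : BC ≃ₐ[ℝ] BC // ∀ s, f (f s) = s} = 6 ∧
    ∀ f : BC ≃ₐ[ℝ] BC,
      (∀ s, f (f s) = s) ↔
        ((∀ s, f s = s) ∨
         (∀ z1 z2 : ℂ, f (C z1 + C z2 * i2) = C z1 - C z2 * i2) ∨
         (∀ z1 z2 : ℂ, f (C z1 + C z2 * i2)
            = C (starRingEnd ℂ z1) + C (starRingEnd ℂ z2) * i2) ∨
         (∀ z1 z2 : ℂ, f (C z1 + C z2 * i2)
            = C (starRingEnd ℂ z1) - C (starRingEnd ℂ z2) * i2) ∨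
         (f i1 = -i2 ∧ f i2 = -i1) ∨
         (f i1 = i2 ∧ f i2 = i1)) := by
  refine ⟨card6, fun f => ⟨fun hinv => ?_, fun h => ?_⟩⟩
  · rcases invol_cases f hinv with h|h|h|h|h|h <;> subst h
    · exact Or.inl fun s => rfl
    · refine Or.inr (Or.inl fun z1 z2 => ?_)
      simp [F1, C, i2, Prod.ext_iff]
      constructor <;> ring
    · refine Or.inr (Or.inr (Or.inl fun z1 z2 => ?_))
      simp [F2, C, i2, Prod.ext_iff, map_add, map_mul, Complex.conj_I]
    · refine Or.inr (Or.inr (Or.inr (Or.inl fun z1 z2 => ?_)))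
      simp [F3, C, i2, Prod.ext_iff, map_add, map_mul, Complex.conj_I]
      constructor <;> ring
    · refine Or.inr (Or.inr (Or.inr (Or.inr (Or.inl ⟨?_, ?_⟩))))
      · simp [F4, i1, i2, Prod.ext_iff]
      · simp [F4, i1, i2, Prod.ext_iff]
    · refine Or.inr (Or.inr (Or.inr (Or.inr (Or.inr ⟨?_, ?_⟩))))
      · simp [F5, i1, i2, Prod.ext_iff]
      · simp [F5, i1, i2, Prod.ext_iff]
  · have he1eq : (C (1/2) + C (Complex.I/2) * i2 : BC) = e1 := by
      simp [C, i2, e1, Prod.ext_iff, Complex.ext_iff]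
      norm_num
    have hi1eq : (C Complex.I + C 0 * i2 : BC) = i1 := by
      simp [C, i1, i2, Prod.ext_iff]
    have hedec : (e1 : BC) = (2:ℝ)⁻¹ • (1 + i1 * i2) := by
      simp [e1, i1, i2, Prod.ext_iff, Complex.ext_iff]
      norm_num
    rcases h with h|h|h|h|⟨h1,h2⟩|⟨h1,h2⟩
    · intro s; rw [h, h]
    · have hf : f = F1 := by
        refine ext_e1_i1 _ _ ?_ ?_
        · rw [← he1eq, h (1/2) (Complex.I/2)]
          simp [F1, C, i2, e1, Prod.ext_iff, Complex.ext_iff]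
        · rw [← hi1eq, h Complex.I 0]
          simp [F1, C, i2, i1, Prod.ext_iff]
      rw [hf]; exact inv1
    · have hf : f = F2 := by
        refine ext_e1_i1 _ _ ?_ ?_
        · rw [← he1eq, h (1/2) (Complex.I/2)]
          simp [F2, C, i2, e1, Prod.ext_iff, Complex.ext_iff, map_add, map_mul, Complex.conj_I]
        · rw [← hi1eq, h Complex.I 0]
          simp [F2, C, i2, i1, Prod.ext_iff, Complex.conj_I]
      rw [hf]; exact inv2
    · have hf : f = F3 := by
        refine ext_e1_i1 _ _ ?_ ?_
        · rw [← he1eq, h (1/2) (Complex.I/2)]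
          simp [F3, C, i2, e1, Prod.ext_iff, Complex.ext_iff, map_add, map_mul, Complex.conj_I]
        · rw [← hi1eq, h Complex.I 0]
          simp [F3, C, i2, i1, Prod.ext_iff, Complex.conj_I]
      rw [hf]; exact inv3
    · have hf : f = F4 := by
        refine ext_e1_i1 _ _ ?_ ?_
        · rw [hedec, map_smul, map_add, map_one, map_mul, h1, h2]
          simp [F4, e1, i1, i2, Prod.ext_iff, Complex.ext_iff]
        · rw [h1]
          simp [F4, i1, i2, Prod.ext_iff]
      rw [hf]; exact inv4
    · have hf : f = F5 := by
        refine ext_e1_i1 _ _ ?_ ?_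
        · rw [hedec, map_smul, map_add, map_one, map_mul, h1, h2]
          simp [F5, e1, i1, i2, Prod.ext_iff, Complex.ext_iff]
        · rw [h1]
          simp [F5, i1, i2, Prod.ext_iff]
      rw [hf]; exact inv5
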